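/- Let f : (0,1) → ℝ be twice differentiable, let S(x) = 1/(1+e^{-x}) be the sigmoid function, and let a(l) = (e^l − 1)/(2(e^l + 1)). Then for every l ∈ ℝ one has a(l)·(f∘S)'(l) + (1/2)·(f∘S)''(l) = (1/2)·S(l)²·(1−S(l))²·f''(S(l)); that is, the operator ℒ̂ = a(l)∂_l + (1/2)∂_{ll} applied to f∘S agrees with (𝒜f)∘S, where (𝒜f)(π) = (1/2)π²(1−π)²f''(π). -/

import Mathlib

lemma sigmoid_hasDerivAt (x : ℝ) :
    HasDerivAt (fun x : ℝ => 1 / (1 + Real.exp (-x)))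
      ((1 / (1 + Real.exp (-x))) * (1 - 1 / (1 + Real.exp (-x)))) x := by
  have hpos : 0 < 1 + Real.exp (-x) := by positivity
  have h1 : HasDerivAt (fun x : ℝ => 1 + Real.exp (-x)) (-Real.exp (-x)) x := by
    have := (Real.hasDerivAt_exp (-x)).comp x ((hasDerivAt_id x).neg)
    simpa using (this.const_add 1)
  have h2 : HasDerivAt (fun y : ℝ => (1 + Real.exp (-y))⁻¹) _ x := h1.inv hpos.ne'
  have key : (1 / (1 + Real.exp (-x))) * (1 - 1 / (1 + Real.exp (-x)))
      = - -Real.exp (-x) / (1 + Real.exp (-x)) ^ 2 := by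
    field_simp; ring
  rw [key]
  simpa [one_div] using h2

/-- For a twice differentiable `f : (0,1) → ℝ`, with `S` the sigmoid and
`a l = (e^l - 1)/(2(e^l + 1))`, we have
`a l * (f ∘ S)' l + (1/2) * (f ∘ S)'' l = (1/2) * S l ^ 2 * (1 - S l) ^ 2 * f'' (S l)`. -/
theorem generator_relation_sigmoid
    (f : ℝ → ℝ)
    (hf : ∀ x ∈ Set.Ioo (0 : ℝ) 1, DifferentiableAt ℝ f x)
    (hf' : ∀ x ∈ Set.Ioo (0 : ℝ) 1, DifferentiableAt ℝ (deriv f) x)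
    (S : ℝ → ℝ) (hS : S = fun x => 1 / (1 + Real.exp (-x)))
    (a : ℝ → ℝ) (ha : a = fun l => (Real.exp l - 1) / (2 * (Real.exp l + 1)))
    (l : ℝ) :
    a l * deriv (f ∘ S) l + (1 / 2) * deriv (deriv (f ∘ S)) l
      = (1 / 2) * (S l) ^ 2 * (1 - S l) ^ 2 * deriv (deriv f) (S l) := by
  have hSd : ∀ x, HasDerivAt S (S x * (1 - S x)) x := by
    subst hS; exact sigmoid_hasDerivAt
  have hmem : ∀ x, S x ∈ Set.Ioo (0 : ℝ) 1 := by
    intro x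
    subst hS
    have hpos : 0 < Real.exp (-x) := Real.exp_pos _
    constructor
    · positivity
    · rw [div_lt_one (by positivity)]; linarith
  have hcomp : ∀ x, HasDerivAt (f ∘ S) (deriv f (S x) * (S x * (1 - S x))) x := by
    intro x
    exact ((hf _ (hmem x)).hasDerivAt).comp x (hSd x)
  have hderiv1 : deriv (f ∘ S) = fun x => deriv f (S x) * (S x * (1 - S x)) := by
    funext x; exact (hcomp x).deriv
  -- second derivative
  have hprod : HasDerivAt (fun x => S x * (1 - S x))
      (S l * (1 - S l) * (1 - 2 * S l)) l := by
    have : HasDerivAt (fun x => S x * (1 - S x)) _ l := (hSd l).mul ((hSd l).const_sub 1)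
    convert this using 1; ring
  have hfS : HasDerivAt (fun x => deriv f (S x))
      (deriv (deriv f) (S l) * (S l * (1 - S l))) l :=
    ((hf' _ (hmem l)).hasDerivAt).comp l (hSd l)
  have h2 : HasDerivAt (fun x => deriv f (S x) * (S x * (1 - S x)))
      (deriv (deriv f) (S l) * (S l * (1 - S l)) * (S l * (1 - S l))
        + deriv f (S l) * (S l * (1 - S l) * (1 - 2 * S l))) l :=
    hfS.mul hprod
  have hderiv2 : deriv (deriv (f ∘ S)) l
      = deriv (deriv f) (S l) * (S l * (1 - S l)) * (S l * (1 - S l))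
        + deriv f (S l) * (S l * (1 - S l) * (1 - 2 * S l)) := by
    rw [hderiv1]; exact h2.deriv
  have hal : a l = S l - 1 / 2 := by
    subst ha hS
    simp only
    have h1 : 0 < Real.exp l + 1 := by positivity
    have h2 : 0 < 1 + Real.exp (-l) := by positivity
    rw [Real.exp_neg]
    have h3 : 0 < Real.exp l := Real.exp_pos l
    field_simp
    ring
  rw [hal, hderiv1, h2.deriv]
  ring
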